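/- For every n ≥ 10, Maker (with Breaker moving first) has a winning strategy in the (1:E_b)-biased triangle game on K_n even when b = ⌊n/2⌋, i.e., even when on each of his turns Breaker may claim an arbitrary matching of previously unclaimed edges. -/

import Mathlib

open Finset

/-- A position in a Maker–Breaker game on the edge set of `K_n`:
`M` is the set of edges claimed by Maker, `B` those claimed by Breaker. -/
structure MBPos (n : ℕ) where
  M : Finset (Sym2 (Fin n))
  B : Finset (Sym2 (Fin n))

/-- The board: the edge set of the complete graph `K_n`, i.e. all
non-diagonal unordered pairs of vertices. -/
def board (n : ℕ) : Finset (Sym2 (Fin n)) :=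
  Finset.univ.filter (fun e => ¬ e.IsDiag)

/-- Maker claims edge `e` if it is a previously unclaimed edge of the board;
an illegal choice leaves the position unchanged (this never helps Maker,
whose goal is monotone in her set of edges). -/
def makerMove {n : ℕ} (p : MBPos n) (e : Sym2 (Fin n)) : MBPos n :=
  if e ∈ board n ∧ e ∉ p.M ∧ e ∉ p.B then ⟨insert e p.M, p.B⟩ else p

/-- Breaker claims the set `S` of edges. -/
def breakerMove {n : ℕ} (p : MBPos n) (S : Finset (Sym2 (Fin n))) : MBPos n :=
  ⟨p.M, p.B ∪ S⟩

/-- A Breaker strategy `bs` is legal for the bias-structure predicate `ok` if at every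
position it claims a set of previously unclaimed edges of the board satisfying `ok`. -/
def LegalBreaker {n : ℕ} (ok : Finset (Sym2 (Fin n)) → Prop)
    (bs : MBPos n → Finset (Sym2 (Fin n))) : Prop :=
  ∀ p : MBPos n, bs p ⊆ board n ∧ (∀ e ∈ bs p, e ∉ p.M ∧ e ∉ p.B) ∧ ok (bs p)

/-- The sequence of positions (one per half-move) when Breaker moves first:
at even steps Breaker moves, at odd steps Maker moves. -/
def playBF {n : ℕ} (ms : MBPos n → Sym2 (Fin n)) (bs : MBPos n → Finset (Sym2 (Fin n))) :
    ℕ → MBPos n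
  | 0 => ⟨∅, ∅⟩
  | k + 1 =>
    let p := playBF ms bs k
    if k % 2 = 0 then breakerMove p (bs p) else makerMove p (ms p)

/-- The sequence of positions (one per half-move) when Maker moves first:
at even steps Maker moves, at odd steps Breaker moves. -/
def playMF {n : ℕ} (ms : MBPos n → Sym2 (Fin n)) (bs : MBPos n → Finset (Sym2 (Fin n))) :
    ℕ → MBPos n
  | 0 => ⟨∅, ∅⟩
  | k + 1 =>
    let p := playMF ms bs k
    if k % 2 = 0 then makerMove p (ms p) else breakerMove p (bs p)

/-- Maker (moving second, Breaker first) has a winning strategy: some Maker strategy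
guarantees, against every legal Breaker strategy, that at some point Maker's claimed
edges satisfy the winning predicate `win`. -/
def MakerWinsBF {n : ℕ} (ok : Finset (Sym2 (Fin n)) → Prop)
    (win : Finset (Sym2 (Fin n)) → Prop) : Prop :=
  ∃ ms, ∀ bs, LegalBreaker ok bs → ∃ t, win (playBF ms bs t).M

/-- Maker (moving first) has a winning strategy. -/
def MakerWinsMF {n : ℕ} (ok : Finset (Sym2 (Fin n)) → Prop)
    (win : Finset (Sym2 (Fin n)) → Prop) : Prop :=
  ∃ ms, ∀ bs, LegalBreaker ok bs → ∃ t, win (playMF ms bs t).M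

/-- Breaker (moving second, Maker first) has a winning strategy: some legal Breaker
strategy guarantees that Maker's claimed edges never satisfy `win`. -/
def BreakerWinsMF {n : ℕ} (ok : Finset (Sym2 (Fin n)) → Prop)
    (win : Finset (Sym2 (Fin n)) → Prop) : Prop :=
  ∃ bs, LegalBreaker ok bs ∧ ∀ ms, ∀ t, ¬ win (playMF ms bs t).M

/-- Breaker (moving first) has a winning strategy. -/
def BreakerWinsBF {n : ℕ} (ok : Finset (Sym2 (Fin n)) → Prop)
    (win : Finset (Sym2 (Fin n)) → Prop) : Prop :=
  ∃ bs, LegalBreaker ok bs ∧ ∀ ms, ∀ t, ¬ win (playBF ms bs t).M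

/-- `(1:K_m)` clique bias: the claimed edges all have their endpoints inside a
single set of at most `m` vertices (i.e. they form a subgraph of a copy of `K_m`). -/
def CliqueBias {n : ℕ} (m : ℕ) (S : Finset (Sym2 (Fin n))) : Prop :=
  ∃ V : Finset (Fin n), V.card ≤ m ∧ ∀ e ∈ S, ∀ v : Fin n, v ∈ e → v ∈ V

/-- `(1:E_b)` matching bias: at most `b` pairwise vertex-disjoint edges. -/
def MatchingBias {n : ℕ} (b : ℕ) (S : Finset (Sym2 (Fin n))) : Prop :=
  S.card ≤ b ∧ ∀ e ∈ S, ∀ f ∈ S, e ≠ f → ∀ v : Fin n, v ∈ e → v ∉ f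

/-- `(1:S_b)` star bias: at most `b` edges sharing a common endpoint (the center). -/
def StarBias {n : ℕ} (b : ℕ) (S : Finset (Sym2 (Fin n))) : Prop :=
  S.card ≤ b ∧ ∃ v : Fin n, ∀ e ∈ S, v ∈ e

/-- Winning predicate for the triangle game: Maker's edges contain a triangle. -/
def TriangleWin {n : ℕ} (M : Finset (Sym2 (Fin n))) : Prop :=
  ∃ u v w : Fin n, u ≠ v ∧ u ≠ w ∧ v ≠ w ∧
    s(u, v) ∈ M ∧ s(u, w) ∈ M ∧ s(v, w) ∈ M

/-- Winning predicate for the connectivity game: Maker's edges form a connected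
spanning subgraph of `K_n`. -/
def ConnWin {n : ℕ} (M : Finset (Sym2 (Fin n))) : Prop :=
  (SimpleGraph.fromEdgeSet (M : Set (Sym2 (Fin n)))).Connected

/-- Winning predicate for the Hamiltonicity game: Maker's edges contain a
Hamilton cycle. -/
def HamWin {n : ℕ} (M : Finset (Sym2 (Fin n))) : Prop :=
  ∃ (a : Fin n) (p : (SimpleGraph.fromEdgeSet (M : Set (Sym2 (Fin n)))).Walk a a),
    p.IsHamiltonianCycle

/-- The degree of vertex `v` in the graph given by the edge set `E`. -/
def degIn {n : ℕ} (E : Finset (Sym2 (Fin n))) (v : Fin n) : ℕ :=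
  (E.filter (fun e => v ∈ e)).card


section Helpers
variable {n : ℕ}

def IsMatch (S : Finset (Sym2 (Fin n))) : Prop :=
  ∀ e ∈ S, ∀ f ∈ S, e ≠ f → ∀ v : Fin n, v ∈ e → v ∉ f

def nbr (B : Finset (Sym2 (Fin n))) (a : Fin n) : Finset (Fin n) :=
  Finset.univ.filter (fun x => s(a,x) ∈ B)

lemma mem_nbr {B : Finset (Sym2 (Fin n))} {a x : Fin n} : x ∈ nbr B a ↔ s(a,x) ∈ B := by
  simp [nbr]

lemma nbr_union (B C : Finset (Sym2 (Fin n))) (a : Fin n) :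
    nbr (B ∪ C) a = nbr B a ∪ nbr C a := by
  ext x; simp [mem_nbr]

lemma nbr_sub_of_match {S : Finset (Sym2 (Fin n))} (hm : IsMatch S) {a z : Fin n}
    (hz : s(a,z) ∈ S) : nbr S a ⊆ {z} := by
  intro x hx
  rw [mem_nbr] at hx
  simp only [mem_singleton]
  by_contra hne
  have hedge : s(a,x) ≠ s(a,z) := by
    intro h
    rw [Sym2.eq_iff] at h
    rcases h with ⟨_, h2⟩ | ⟨h1, h2⟩
    · exact hne h2
    · exact hne (h2.trans h1)
  exact hm _ hx _ hz hedge a (by simp) (by simp)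

lemma nbr_card_of_match {S : Finset (Sym2 (Fin n))} (hm : IsMatch S) (a : Fin n) :
    (nbr S a).card ≤ 1 := by
  by_cases h : (nbr S a).Nonempty
  · obtain ⟨z, hz⟩ := h
    have := nbr_sub_of_match hm (mem_nbr.mp hz)
    calc (nbr S a).card ≤ ({z} : Finset (Fin n)).card := card_le_card this
    _ = 1 := card_singleton z
  · rw [not_nonempty_iff_eq_empty] at h
    simp [h]

lemma not_self_nbr {B : Finset (Sym2 (Fin n))} (hb : B ⊆ board n) (a : Fin n) :
    a ∉ nbr B a := by
  rw [mem_nbr]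
  intro h
  have := hb h
  simp [board, Sym2.isDiag_iff_proj_eq] at this

def badF (B : Finset (Sym2 (Fin n))) (u v z : Fin n) : Finset (Fin n) :=
  (nbr B u ∪ nbr B v ∪ nbr B z) \ {u, v, z}

lemma badF_union (B C : Finset (Sym2 (Fin n))) (u v z : Fin n) :
    badF (B ∪ C) u v z = badF B u v z ∪ badF C u v z := by
  simp only [badF, nbr_union]
  rw [← union_sdiff_distrib]
  congr 1
  ext x; simp [mem_union]; tauto

lemma badF_card_le (B : Finset (Sym2 (Fin n))) (u v z : Fin n) :
    (badF B u v z).card ≤ (nbr B u).card + (nbr B v).card + (nbr B z).card := by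
  calc (badF B u v z).card ≤ (nbr B u ∪ nbr B v ∪ nbr B z).card :=
        card_le_card (sdiff_subset)
  _ ≤ (nbr B u ∪ nbr B v).card + (nbr B z).card := card_union_le _ _
  _ ≤ (nbr B u).card + (nbr B v).card + (nbr B z).card := by
      have := card_union_le (nbr B u) (nbr B v); omega

lemma exists_outside {S : Finset (Fin n)} (h : S.card < n) : ∃ x : Fin n, x ∉ S := by
  by_contra hc
  push_neg at hc
  have hsub : (univ : Finset (Fin n)) ⊆ S := fun x _ => hc x
  have := card_le_card hsub
  simp at this
  omega

lemma mk_mem_board {a b : Fin n} (h : a ≠ b) : s(a,b) ∈ board n := by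
  simp [board, Sym2.isDiag_iff_proj_eq, h]

lemma triangle_card {M : Finset (Sym2 (Fin n))} (h : TriangleWin M) : 3 ≤ M.card := by
  obtain ⟨u, v, w, huv, huw, hvw, h1, h2, h3⟩ := h
  have hsub : ({s(u,v), s(u,w), s(v,w)} : Finset (Sym2 (Fin n))) ⊆ M := by
    intro e he
    simp only [mem_insert, mem_singleton] at he
    rcases he with h | h | h <;> (subst h; assumption)
  have hcard : ({s(u,v), s(u,w), s(v,w)} : Finset (Sym2 (Fin n))).card = 3 := by
    rw [card_insert_of_notMem, card_insert_of_notMem, card_singleton]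
    · simp only [mem_singleton]
      intro hh; rw [Sym2.eq_iff] at hh; tauto
    · simp only [mem_insert, mem_singleton]
      push_neg
      constructor <;> (intro hh; rw [Sym2.eq_iff] at hh; tauto)
  calc 3 = ({s(u,v), s(u,w), s(v,w)} : Finset (Sym2 (Fin n))).card := hcard.symm
  _ ≤ M.card := card_le_card hsub

end Helpers


section M2E
variable {n : ℕ}

lemma badF_le_pair (B : Finset (Sym2 (Fin n))) (u v z : Fin n) :
    (badF B u v z).card ≤ (nbr B u ∪ nbr B z).card + (nbr B v).card := by
  calc (badF B u v z).card ≤ (nbr B u ∪ nbr B v ∪ nbr B z).card :=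
        card_le_card sdiff_subset
  _ = ((nbr B u ∪ nbr B z) ∪ nbr B v).card := by rw [union_right_comm]
  _ ≤ (nbr B u ∪ nbr B z).card + (nbr B v).card := card_union_le _ _

lemma card_union_of_inter {α : Type*} [DecidableEq α] {s t : Finset α} {a : α}
    (ha : a ∈ s) (hb : a ∈ t) (hs : s.card ≤ 2) (ht : t.card ≤ 2) :
    (s ∪ t).card ≤ 3 := by
  have h1 : 1 ≤ (s ∩ t).card := card_pos.mpr ⟨a, mem_inter.mpr ⟨ha, hb⟩⟩
  have := Finset.card_union_add_card_inter s t
  omega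

lemma M2E (hn : 10 ≤ n) {B1 B2 : Finset (Sym2 (Fin n))} (hm1 : IsMatch B1) (hm2 : IsMatch B2)
    (hb1 : B1 ⊆ board n) (hb2 : B2 ⊆ board n) {u v : Fin n} (huv : u ≠ v)
    (hG : s(u,v) ∉ B1 ∪ B2) :
    ∃ z, z ≠ u ∧ z ≠ v ∧ s(v,z) ∉ B1 ∪ B2 ∧
      ((s(u,z) ∉ B1 ∪ B2 ∧ (badF (B1 ∪ B2) u v z).card ≤ 5) ∨
       (s(u,z) ∈ B1 ∪ B2 ∧ (badF (B1 ∪ B2) u v z).card ≤ 3)) := by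
  set G := B1 ∪ B2 with hGdef
  have hbG : G ⊆ board n := union_subset hb1 hb2
  have hNcard : ∀ a : Fin n, (nbr G a).card ≤ 2 := by
    intro a
    have h1 := nbr_card_of_match hm1 a
    have h2 := nbr_card_of_match hm2 a
    have h3 := card_union_le (nbr B1 a) (nbr B2 a)
    rw [hGdef, nbr_union]
    omega
  by_cases hA : ∃ w, w ≠ u ∧ w ≠ v ∧ s(u,w) ∉ G ∧ s(v,w) ∉ G ∧ (badF G u v w).card ≤ 5
  · obtain ⟨w, h1, h2, h3, h4, h5⟩ := hA
    exact ⟨w, h1, h2, h4, Or.inl ⟨h3, h5⟩⟩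
  push_neg at hA
  -- eligible vertex w exists
  obtain ⟨w, hw⟩ : ∃ w : Fin n, w ∉ ({u, v} : Finset (Fin n)) ∪ nbr G u ∪ nbr G v := by
    apply exists_outside
    have c1 : (({u, v} : Finset (Fin n)) ∪ nbr G u ∪ nbr G v).card ≤
        ({u, v} : Finset (Fin n)).card + (nbr G u).card + (nbr G v).card := by
      have := card_union_le (({u, v} : Finset (Fin n)) ∪ nbr G u) (nbr G v)
      have := card_union_le ({u, v} : Finset (Fin n)) (nbr G u)
      omega
    have c2 : ({u, v} : Finset (Fin n)).card ≤ 2 := by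
      have := card_insert_le u ({v} : Finset (Fin n)); simpa using this
    have := hNcard u; have := hNcard v
    omega
  simp only [mem_union, mem_insert, mem_singleton] at hw
  push_neg at hw
  obtain ⟨⟨⟨hwu, hwv⟩, hwnu⟩, hwnv⟩ := hw
  have huwG : s(u,w) ∉ G := fun h => hwnu (mem_nbr.mpr h)
  have hvwG : s(v,w) ∉ G := fun h => hwnv (mem_nbr.mpr h)
  have hsat := hA w hwu hwv huwG hvwG
  -- (ii) Breaker neighbourhoods of u and v are disjoint
  have hdisj : ∀ a ∈ nbr G u, s(v,a) ∉ G := by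
    intro a ha hva
    have hint := card_union_of_inter ha (mem_nbr.mpr hva) (hNcard u) (hNcard v)
    have h1 : (badF G u v w).card ≤ (nbr G u ∪ nbr G v).card + (nbr G w).card := by
      calc (badF G u v w).card ≤ (nbr G u ∪ nbr G v ∪ nbr G w).card :=
            card_le_card sdiff_subset
      _ ≤ (nbr G u ∪ nbr G v).card + (nbr G w).card := card_union_le _ _
    have := hNcard w
    omega
  -- (i) |nbr G u| = 2
  have hNu2 : (nbr G u).card = 2 := by
    have hge : 2 ≤ (nbr G u).card := by
      by_contra hlt
      have h1 := badF_card_le G u v w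
      have := hNcard v; have := hNcard w
      omega
    have := hNcard u
    omega
  obtain ⟨a1, a2, ha12, hNueq⟩ := Finset.card_eq_two.mp hNu2
  have ha1 : s(u,a1) ∈ G := mem_nbr.mp (by rw [hNueq]; simp)
  have ha2 : s(u,a2) ∈ G := mem_nbr.mp (by rw [hNueq]; simp)
  have hne_u : ∀ a : Fin n, s(u,a) ∈ G → a ≠ u := by
    intro a ha hau
    subst hau
    have := hbG ha
    simp [board, Sym2.isDiag_iff_proj_eq] at this
  have ha1u : a1 ≠ u := hne_u a1 ha1
  have ha2u : a2 ≠ u := hne_u a2 ha2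
  -- round lemma : s(a1,a2) ∉ G
  have hround : s(a1,a2) ∉ G := by
    intro ha12G
    have hedgene : s(u,a1) ≠ s(u,a2) := by
      intro hh; rw [Sym2.eq_iff] at hh; tauto
    have hkey : ∀ (Bi : Finset (Sym2 (Fin n))), IsMatch Bi →
        s(u,a1) ∈ Bi → s(u,a2) ∈ Bi → False := by
      intro Bi hmi h1 h2
      exact hmi _ h1 _ h2 hedgene u (by simp) (by simp)
    have hin : ∀ (Bi : Finset (Sym2 (Fin n))), IsMatch Bi →
        s(a1,a2) ∈ Bi → s(u,a1) ∈ Bi → False := by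
      intro Bi hmi h1 h2
      have hne2 : s(a1,a2) ≠ s(u,a1) := by
        intro hh; rw [Sym2.eq_iff] at hh
        rcases hh with ⟨hx, hy⟩ | ⟨hx, hy⟩
        · exact ha1u hx
        · exact ha2u hy
      exact hmi _ h1 _ h2 hne2 a1 (by simp) (by simp)
    have hin2 : ∀ (Bi : Finset (Sym2 (Fin n))), IsMatch Bi →
        s(a1,a2) ∈ Bi → s(u,a2) ∈ Bi → False := by
      intro Bi hmi h1 h2
      have hne2 : s(a1,a2) ≠ s(u,a2) := by
        intro hh; rw [Sym2.eq_iff] at hh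
        rcases hh with ⟨hx, hy⟩ | ⟨hx, hy⟩
        · exact ha1u hx
        · exact ha12 hx
      exact hmi _ h1 _ h2 hne2 a2 (by simp) (by simp)
    rw [hGdef] at ha12G ha1 ha2
    rcases mem_union.mp ha12G with h12 | h12 <;>
      rcases mem_union.mp ha1 with hA1 | hA1 <;>
        rcases mem_union.mp ha2 with hA2 | hA2
    · exact hin B1 hm1 h12 hA1
    · exact hin B1 hm1 h12 hA1
    · exact hin2 B1 hm1 h12 hA2
    · exact hkey B2 hm2 hA1 hA2
    · exact hkey B1 hm1 hA1 hA2
    · exact hin2 B2 hm2 h12 hA2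
    · exact hin B2 hm2 h12 hA1
    · exact hin B2 hm2 h12 hA1
  -- key property: every G-neighbour of a1 other than u is a G-neighbour of v
  have hkeyprop : ∀ y : Fin n, s(a1,y) ∈ G → y = u ∨ s(v,y) ∈ G := by
    intro y hy
    by_contra hcon
    push_neg at hcon
    obtain ⟨hyu, hvy⟩ := hcon
    have hya2 : y ≠ a2 := by
      intro h; subst h; exact hround hy
    have hyv : y ≠ v := by
      intro h; subst h
      exact hdisj a1 (by rw [hNueq]; simp) (by rwa [Sym2.eq_swap] at hy)
    have huy : s(u,y) ∉ G := by
      intro h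
      have hmem : y ∈ nbr G u := mem_nbr.mpr h
      rw [hNueq] at hmem; simp at hmem
      rcases hmem with h' | h'
      · subst h'
        have := hbG hy; simp [board, Sym2.isDiag_iff_proj_eq] at this
      · exact hya2 h'
    have hsaty := hA y hyu hyv huy hvy
    have ha1y : a1 ∈ nbr G y := mem_nbr.mpr (by rwa [Sym2.eq_swap] at hy)
    have ha1u' : a1 ∈ nbr G u := by rw [hNueq]; simp
    have hun : (nbr G u ∪ nbr G y).card ≤ 3 :=
      card_union_of_inter ha1u' ha1y (hNcard u) (hNcard y)
    have hb := badF_le_pair G u v y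
    have := hNcard v
    omega
  have ha1v : a1 ≠ v := by
    intro h; subst h; exact hG ha1
  have hva1G : s(v,a1) ∉ G := hdisj a1 (by rw [hNueq]; simp)
  refine ⟨a1, ha1u, ha1v, hva1G, Or.inr ⟨ha1, ?_⟩⟩
  have hsub : badF G u v a1 ⊆ insert a2 (nbr G v) := by
    intro x hx
    simp only [badF, mem_sdiff, mem_union, mem_insert, mem_singleton] at hx ⊢
    obtain ⟨hmem, hnot⟩ := hx
    push_neg at hnot
    obtain ⟨hxu, hxv, hxa1⟩ := hnot
    rcases hmem with (hxu' | hxv') | hxa1'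
    · left
      rw [hNueq] at hxu'; simp at hxu'
      rcases hxu' with h' | h'
      · exact absurd h' hxa1
      · exact h'
    · right; exact hxv'
    · rcases hkeyprop x (mem_nbr.mp hxa1') with h | h
      · exact absurd h hxu
      · right; exact mem_nbr.mpr h
  calc (badF G u v a1).card ≤ (insert a2 (nbr G v)).card := card_le_card hsub
  _ ≤ (nbr G v).card + 1 := card_insert_le _ _
  _ ≤ 3 := by have := hNcard v; omega

end M2E


section Strategy
variable {n : ℕ}

open Classical in
noncomputable def winSet (p : MBPos n) : Finset (Sym2 (Fin n)) :=
  (board n \ (p.M ∪ p.B)).filter (fun e => TriangleWin (insert e p.M))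

lemma mem_winSet {p : MBPos n} {e : Sym2 (Fin n)} :
    e ∈ winSet p ↔ (e ∈ board n ∧ e ∉ p.M ∧ e ∉ p.B) ∧ TriangleWin (insert e p.M) := by
  classical
  simp only [winSet, mem_filter, mem_sdiff, mem_union]
  tauto

lemma winSet_empty_of_small {p : MBPos n} (h : p.M.card ≤ 1) : ¬ (winSet p).Nonempty := by
  rintro ⟨e, he⟩
  obtain ⟨-, hw⟩ := mem_winSet.mp he
  have h3 := triangle_card hw
  have := card_insert_le e p.M
  omega

def P1 (u0 : Fin n) (p : MBPos n) (v : Fin n) : Prop :=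
  p.M = ∅ ∧ v ≠ u0 ∧ s(u0, v) ∉ p.B

def Zcond (p : MBPos n) (u v z : Fin n) : Prop :=
  z ≠ u ∧ z ≠ v ∧ s(v,z) ∉ p.B ∧ s(v,z) ∉ p.M ∧
    ((s(u,z) ∉ p.B ∧ (badF p.B u v z).card ≤ 5) ∨
     (s(u,z) ∈ p.B ∧ (badF p.B u v z).card ≤ 3))

def P2 (u0 : Fin n) (p : MBPos n) (w : Fin n × Fin n) : Prop :=
  p.M = {s(u0, w.1)} ∧ w.1 ≠ u0 ∧ Zcond p u0 w.1 w.2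

/-- `q = (u, z, v, x)`; Maker has the cherry `uv, vz` and `x` is a fresh vertex for
the double threat. -/
def P3 (p : MBPos n) (q : Fin n × Fin n × Fin n × Fin n) : Prop :=
  q.1 ≠ q.2.1 ∧ q.1 ≠ q.2.2.1 ∧ q.2.1 ≠ q.2.2.1 ∧
  q.2.2.2 ≠ q.1 ∧ q.2.2.2 ≠ q.2.1 ∧ q.2.2.2 ≠ q.2.2.1 ∧
  p.M = {s(q.1, q.2.2.1), s(q.2.2.1, q.2.1)} ∧
  s(q.1, q.2.2.2) ∉ p.B ∧ s(q.2.1, q.2.2.2) ∉ p.B ∧ s(q.2.2.1, q.2.2.2) ∉ p.B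

open Classical in
noncomputable def mst (u0 : Fin n) (p : MBPos n) : Sym2 (Fin n) :=
  if h : (winSet p).Nonempty then h.choose
  else if h1 : ∃ v, P1 u0 p v then s(u0, h1.choose)
  else if h2 : ∃ w, P2 u0 p w then s(h2.choose.1, h2.choose.2)
  else if h3 : ∃ q, P3 p q then s(h3.choose.2.2.1, h3.choose.2.2.2)
  else s(u0, u0)

lemma makerMove_eq {p : MBPos n} {e : Sym2 (Fin n)} (h1 : e ∈ board n) (h2 : e ∉ p.M)
    (h3 : e ∉ p.B) : makerMove p e = ⟨insert e p.M, p.B⟩ := by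
  simp [makerMove, h1, h2, h3]

lemma playBF_even (ms : MBPos n → Sym2 (Fin n)) (bs) (k : ℕ) (h : k % 2 = 0) :
    playBF ms bs (k+1) = breakerMove (playBF ms bs k) (bs (playBF ms bs k)) := by
  simp [playBF, h]

lemma playBF_odd (ms : MBPos n → Sym2 (Fin n)) (bs) (k : ℕ) (h : k % 2 = 1) :
    playBF ms bs (k+1) = makerMove (playBF ms bs k) (ms (playBF ms bs k)) := by
  simp [playBF, h]

end Strategy


set_option maxHeartbeats 1000000

/-- for every `n ≥ 10`, Maker (Breaker moving first) wins the
`(1:E_b)`-biased triangle game on `K_n` even with the maximal matching bias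
`b = ⌊n/2⌋`. -/
theorem matching_bias_triangle_maker (n : ℕ) (h : 10 ≤ n) :
    MakerWinsBF (n := n) (MatchingBias (n / 2)) TriangleWin := by
  have h0 : 0 < n := by omega
  refine ⟨mst ⟨0, h0⟩, ?_⟩
  intro bs hbs
  set u0 : Fin n := ⟨0, h0⟩ with hu0def
  set P : ℕ → MBPos n := playBF (mst u0) bs with hPdef
  have hmatch : ∀ p : MBPos n, IsMatch (bs p) := fun p => (hbs p).2.2.2
  have hboard : ∀ p : MBPos n, bs p ⊆ board n := fun p => (hbs p).1
  have hnewM : ∀ p : MBPos n, ∀ e ∈ bs p, e ∉ p.M := fun p e he => ((hbs p).2.1 e he).1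
  -- steps 0,1
  have q0 : P 0 = ⟨∅, ∅⟩ := rfl
  have q1 : P 1 = breakerMove (P 0) (bs (P 0)) := playBF_even _ _ 0 rfl
  have hM1 : (P 1).M = ∅ := by rw [q1, q0]; rfl
  have hB1 : (P 1).B = bs (P 0) := by rw [q1, q0]; simp [breakerMove]
  -- Maker's first move: a free edge at u0
  have hW1 : ¬ (winSet (P 1)).Nonempty := winSet_empty_of_small (by rw [hM1]; simp)
  have hE1 : ∃ v, P1 u0 (P 1) v := by
    obtain ⟨v, hv⟩ : ∃ v : Fin n, v ∉ insert u0 (nbr ((P 1).B) u0) := by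
      apply exists_outside
      have h1 : (nbr ((P 1).B) u0).card ≤ 1 := by
        rw [hB1]; exact nbr_card_of_match (hmatch _) u0
      have := card_insert_le u0 (nbr ((P 1).B) u0)
      omega
    simp only [mem_insert] at hv
    push_neg at hv
    exact ⟨v, hM1, hv.1, fun hB => hv.2 (mem_nbr.mpr hB)⟩
  have hms1 : mst u0 (P 1) = s(u0, hE1.choose) := by
    unfold mst; rw [dif_neg hW1, dif_pos hE1]
  have hspec1 := hE1.choose_spec
  set v0 := hE1.choose with hv0def
  obtain ⟨hPM1, hv0u, hv0B⟩ := hspec1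
  -- step 2
  have q2 : P 2 = makerMove (P 1) (mst u0 (P 1)) := playBF_odd _ _ 1 rfl
  have hP2 : P 2 = ⟨insert (s(u0,v0)) (P 1).M, (P 1).B⟩ := by
    rw [q2, hms1]
    exact makerMove_eq (mk_mem_board (Ne.symm hv0u)) (by rw [hM1]; simp) hv0B
  have hM2 : (P 2).M = {s(u0,v0)} := by rw [hP2]; dsimp only; rw [hM1]; rfl
  have hB2 : (P 2).B = (P 1).B := by rw [hP2]
  -- step 3
  have q3 : P 3 = breakerMove (P 2) (bs (P 2)) := playBF_even _ _ 2 rfl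
  have hM3 : (P 3).M = (P 2).M := by rw [q3]; rfl
  have hB3 : (P 3).B = bs (P 0) ∪ bs (P 2) := by
    rw [q3]; show (P 2).B ∪ _ = _; rw [hB2, hB1]
  -- choose z via the key combinatorial lemma
  have hG : s(u0, v0) ∉ bs (P 0) ∪ bs (P 2) := by
    rw [mem_union]
    rintro (hc | hc)
    · exact hv0B (by rwa [hB1])
    · exact (hnewM (P 2) _ hc) (by rw [hM2]; simp)
  obtain ⟨z, hzu, hzv, hvz, hZ⟩ :=
    M2E h (hmatch (P 0)) (hmatch (P 2)) (hboard _) (hboard _) (Ne.symm hv0u) hG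
  have hE2 : ∃ w, P2 u0 (P 3) w := by
    refine ⟨(v0, z), ?_, hv0u, hzu, hzv, ?_, ?_, ?_⟩
    · rw [hM3, hM2]
    · rw [hB3]; exact hvz
    · rw [hM3, hM2]
      simp only [mem_singleton]
      intro hh; rw [Sym2.eq_iff] at hh; tauto
    · rw [hB3]; exact hZ
  have hW3 : ¬ (winSet (P 3)).Nonempty := winSet_empty_of_small (by rw [hM3, hM2]; simp)
  have hP1f3 : ¬ ∃ v, P1 u0 (P 3) v := by
    rintro ⟨v, hv, -, -⟩
    rw [hM3, hM2] at hv
    simp at hv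
  have hms3 : mst u0 (P 3) = s(hE2.choose.1, hE2.choose.2) := by
    unfold mst; rw [dif_neg hW3, dif_neg hP1f3, dif_pos hE2]
  have hspec2 := hE2.choose_spec
  unfold P2 Zcond at hspec2
  set v1 := hE2.choose.1 with hv1def
  set z1 := hE2.choose.2 with hz1def
  obtain ⟨hM3eq, hv1u, hz1u, hz1v, hvz1B, hvz1M, hZ1⟩ := hspec2
  -- step 4
  have q4 : P 4 = makerMove (P 3) (mst u0 (P 3)) := playBF_odd _ _ 3 rfl
  have hP4 : P 4 = ⟨insert (s(v1,z1)) (P 3).M, (P 3).B⟩ := by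
    rw [q4, hms3]
    exact makerMove_eq (mk_mem_board (Ne.symm hz1v)) hvz1M hvz1B
  have hM4 : (P 4).M = insert (s(v1,z1)) {s(u0,v1)} := by
    rw [hP4]; dsimp only; rw [hM3eq]; rfl
  have hB4 : (P 4).B = (P 3).B := by rw [hP4]
  -- step 5
  have q5 : P 5 = breakerMove (P 4) (bs (P 4)) := playBF_even _ _ 4 rfl
  have hM5 : (P 5).M = insert (s(v1,z1)) {s(u0,v1)} := by
    rw [q5]; show (P 4).M = _; rw [hM4]
  have hB5 : (P 5).B = (P 3).B ∪ bs (P 4) := by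
    rw [q5]; show (P 4).B ∪ _ = _; rw [hB4]
  by_cases hW5 : (winSet (P 5)).Nonempty
  · -- Maker wins at move 6
    refine ⟨6, ?_⟩
    have q6 : P 6 = makerMove (P 5) (mst u0 (P 5)) := playBF_odd _ _ 5 rfl
    have hms5 : mst u0 (P 5) = hW5.choose := by unfold mst; rw [dif_pos hW5]
    obtain ⟨⟨hb, hm, hbB⟩, htri⟩ := mem_winSet.mp hW5.choose_spec
    have hP6 : P 6 = ⟨insert hW5.choose (P 5).M, (P 5).B⟩ := by
      rw [q6, hms5]; exact makerMove_eq hb hm hbB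
    show TriangleWin (P 6).M
    rw [hP6]
    exact htri
  · -- main line: double threat at move 6, win at move 8
    have hz1u' : u0 ≠ z1 := Ne.symm hz1u
    -- the threat edge u0-z1 must be Breaker's by now (else winSet (P 5) is nonempty)
    have huz5 : s(u0,z1) ∈ (P 5).B := by
      by_contra hc
      apply hW5
      refine ⟨s(u0,z1), mem_winSet.mpr ⟨⟨mk_mem_board hz1u', ?_, hc⟩, ?_⟩⟩
      · rw [hM5]
        simp only [mem_insert, mem_singleton]
        push_neg
        constructor
        · intro hh; rw [Sym2.eq_iff] at hh
          rcases hh with ⟨h1, -⟩ | ⟨h1, -⟩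
          · exact hv1u h1.symm
          · exact hz1u' h1
        · intro hh; rw [Sym2.eq_iff] at hh
          rcases hh with ⟨-, h2⟩ | ⟨h1, -⟩
          · exact hz1v h2
          · exact hv1u h1.symm
      · refine ⟨u0, v1, z1, Ne.symm hv1u, hz1u', Ne.symm hz1v, ?_, ?_, ?_⟩
        · exact mem_insert_of_mem (by rw [hM5]; exact mem_insert_of_mem (mem_singleton_self _))
        · exact mem_insert_self _ _
        · exact mem_insert_of_mem (by rw [hM5]; exact mem_insert_self _ _)
    -- bound the bad set after Breaker's third move
    have hcard4 : (badF (bs (P 4)) u0 v1 z1).card + (badF ((P 3).B) u0 v1 z1).card ≤ 6 := by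
      rcases hZ1 with ⟨hfree, hcard⟩ | ⟨hmem, hcard⟩
      · have huz4 : s(u0,z1) ∈ bs (P 4) := by
          have h5 := huz5; rw [hB5, mem_union] at h5
          exact h5.resolve_left hfree
        have hsub : badF (bs (P 4)) u0 v1 z1 ⊆ nbr (bs (P 4)) v1 := by
          intro x hx
          simp only [badF, mem_sdiff, mem_union, mem_insert, mem_singleton] at hx
          obtain ⟨hmem', hnot⟩ := hx
          push_neg at hnot
          rcases hmem' with (h1 | h2) | h3
          · exact absurd (mem_singleton.mp (nbr_sub_of_match (hmatch _) huz4 h1)) hnot.2.2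
          · exact h2
          · have hx0 : x ∈ ({u0} : Finset (Fin n)) :=
              nbr_sub_of_match (hmatch _) (by rwa [Sym2.eq_swap] at huz4) h3
            exact absurd (mem_singleton.mp hx0) hnot.1
        have h1 := card_le_card hsub
        have h2 := nbr_card_of_match (hmatch (P 4)) v1
        change (badF (P 3).B u0 v1 z1).card ≤ 5 at hcard
        omega
      · have hb := badF_card_le (bs (P 4)) u0 v1 z1
        have h1 := nbr_card_of_match (hmatch (P 4)) u0
        have h2 := nbr_card_of_match (hmatch (P 4)) v1
        have h3 := nbr_card_of_match (hmatch (P 4)) z1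
        change (badF (P 3).B u0 v1 z1).card ≤ 3 at hcard
        omega
    have hbad5 : (badF ((P 5).B) u0 v1 z1).card ≤ 6 := by
      rw [hB5, badF_union]
      have := card_union_le (badF ((P 3).B) u0 v1 z1) (badF (bs (P 4)) u0 v1 z1)
      omega
    -- pigeonhole: a completely fresh vertex x
    obtain ⟨x, hx⟩ : ∃ x : Fin n, x ∉ badF ((P 5).B) u0 v1 z1 ∪ {u0, v1, z1} := by
      apply exists_outside
      have h1 := card_union_le (badF ((P 5).B) u0 v1 z1) ({u0, v1, z1} : Finset (Fin n))
      have h2 : ({u0, v1, z1} : Finset (Fin n)).card ≤ 3 := by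
        have c1 := card_insert_le u0 ({v1, z1} : Finset (Fin n))
        have c2 := card_insert_le v1 ({z1} : Finset (Fin n))
        simp only [card_singleton] at c1 c2
        omega
      omega
    rw [mem_union] at hx
    push_neg at hx
    obtain ⟨hxbad, hxtrio⟩ := hx
    simp only [mem_insert, mem_singleton] at hxtrio
    push_neg at hxtrio
    obtain ⟨hxu, hxv, hxz⟩ := hxtrio
    have hfr : ∀ a : Fin n, a ∈ ({u0, v1, z1} : Finset (Fin n)) → s(a,x) ∉ (P 5).B := by
      intro a ha hc
      apply hxbad
      simp only [badF, mem_sdiff, mem_union, mem_insert, mem_singleton]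
      simp only [mem_insert, mem_singleton] at ha
      refine ⟨?_, by push_neg; exact ⟨hxu, hxv, hxz⟩⟩
      rcases ha with rfl | rfl | rfl
      · left; left; exact mem_nbr.mpr hc
      · left; right; exact mem_nbr.mpr hc
      · right; exact mem_nbr.mpr hc
    have hfru : s(u0,x) ∉ (P 5).B := hfr u0 (by simp)
    have hfrv : s(v1,x) ∉ (P 5).B := hfr v1 (by simp)
    have hfrz : s(z1,x) ∉ (P 5).B := hfr z1 (by simp)
    -- falsify the earlier strategy branches at P 5
    have hP1f5 : ¬ ∃ v, P1 u0 (P 5) v := by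
      rintro ⟨v, hv⟩
      unfold P1 at hv
      rw [hM5] at hv
      exact (insert_ne_empty _ _) hv.1
    have hne45 : s(v1,z1) ∉ ({s(u0,v1)} : Finset (Sym2 (Fin n))) := by
      simp only [mem_singleton]
      intro hh; rw [Sym2.eq_iff] at hh
      rcases hh with ⟨h1, -⟩ | ⟨-, h2⟩
      · exact hv1u h1
      · exact hz1u h2
    have hcard5M : (P 5).M.card = 2 := by
      rw [hM5, card_insert_of_notMem hne45, card_singleton]
    have hP2f5 : ¬ ∃ w, P2 u0 (P 5) w := by
      rintro ⟨w, hw⟩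
      unfold P2 at hw
      rw [hw.1] at hcard5M
      simp at hcard5M
    have hE3 : ∃ q, P3 (P 5) q := by
      refine ⟨(u0, z1, v1, x), hz1u', Ne.symm hv1u, hz1v, hxu, hxz, hxv, ?_, hfru, hfrz, hfrv⟩
      rw [hM5]
      exact Finset.pair_comm _ _
    have hms5 : mst u0 (P 5) = s(hE3.choose.2.2.1, hE3.choose.2.2.2) := by
      unfold mst; rw [dif_neg hW5, dif_neg hP1f5, dif_neg hP2f5, dif_pos hE3]
    have hspec3 := hE3.choose_spec
    unfold P3 at hspec3
    set u' := hE3.choose.1 with hu'def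
    set z' := hE3.choose.2.1 with hz'def
    set v' := hE3.choose.2.2.1 with hv'def
    set x' := hE3.choose.2.2.2 with hx'def
    obtain ⟨huz', huv', hzv', hxu', hxz', hxv', hMeq', hbu', hbz', hbv'⟩ := hspec3
    -- step 6
    have q6 : P 6 = makerMove (P 5) (mst u0 (P 5)) := playBF_odd _ _ 5 rfl
    have hvx'M : s(v',x') ∉ (P 5).M := by
      rw [hMeq']
      simp only [mem_insert, mem_singleton]
      push_neg
      constructor
      · intro hh; rw [Sym2.eq_iff] at hh
        rcases hh with ⟨h1, -⟩ | ⟨-, h2⟩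
        · exact huv' h1.symm
        · exact hxu' h2
      · intro hh; rw [Sym2.eq_iff] at hh
        rcases hh with ⟨-, h2⟩ | ⟨h1, -⟩
        · exact hxz' h2
        · exact hzv' h1.symm
    have hP6 : P 6 = ⟨insert (s(v',x')) (P 5).M, (P 5).B⟩ := by
      rw [q6, hms5]
      exact makerMove_eq (mk_mem_board (Ne.symm hxv')) hvx'M hbv'
    have hM6 : (P 6).M = insert (s(v',x')) (P 5).M := by rw [hP6]
    have hB6 : (P 6).B = (P 5).B := by rw [hP6]
    -- step 7 (Breaker's fourth move)
    have q7 : P 7 = breakerMove (P 6) (bs (P 6)) := playBF_even _ _ 6 rfl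
    have hM7 : (P 7).M = insert (s(v',x')) (P 5).M := by
      rw [q7]; show (P 6).M = _; rw [hM6]
    have hB7 : (P 7).B = (P 5).B ∪ bs (P 6) := by
      rw [q7]; show (P 6).B ∪ _ = _; rw [hB6]
    -- maker edges present at P 7
    have hmu'v' : s(u',v') ∈ (P 7).M := by
      rw [hM7, hMeq']; exact mem_insert_of_mem (mem_insert_self _ _)
    have hmv'z' : s(v',z') ∈ (P 7).M := by
      rw [hM7, hMeq']; exact mem_insert_of_mem (mem_insert_of_mem (mem_singleton_self _))
    have hmv'x' : s(v',x') ∈ (P 7).M := by rw [hM7]; exact mem_insert_self _ _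
    -- one of the two threats survives Breaker's fourth move
    have hnex : s(u',x') ≠ s(z',x') := by
      intro hh; rw [Sym2.eq_iff] at hh
      rcases hh with ⟨h1, -⟩ | ⟨h1, -⟩
      · exact huz' h1
      · exact hxu' h1.symm
    have hW7 : (winSet (P 7)).Nonempty := by
      by_cases hc : s(u',x') ∈ bs (P 6)
      · -- the threat z'-x' is still free
        have hnotS : s(z',x') ∉ bs (P 6) := by
          intro hc2
          exact ((hmatch (P 6)) _ hc _ hc2 hnex x' (by simp)) (by simp)
        refine ⟨s(z',x'), mem_winSet.mpr ⟨⟨mk_mem_board (Ne.symm hxz'), ?_, ?_⟩, ?_⟩⟩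
        · rw [hM7, hMeq']
          simp only [mem_insert, mem_singleton]
          push_neg
          refine ⟨?_, ?_, ?_⟩
          · intro hh; rw [Sym2.eq_iff] at hh
            rcases hh with ⟨h1, -⟩ | ⟨-, h2⟩
            · exact hzv' h1
            · exact hxv' h2
          · intro hh; rw [Sym2.eq_iff] at hh
            rcases hh with ⟨h1, -⟩ | ⟨h1, -⟩
            · exact huz' h1.symm
            · exact hzv' h1
          · intro hh; rw [Sym2.eq_iff] at hh
            rcases hh with ⟨h1, -⟩ | ⟨-, h2⟩
            · exact hzv' h1
            · exact hxv' h2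
        · rw [hB7, mem_union]
          rintro (hcc | hcc)
          · exact hbz' hcc
          · exact hnotS hcc
        · refine ⟨v', z', x', Ne.symm hzv', Ne.symm hxv', Ne.symm hxz', ?_, ?_, ?_⟩
          · exact mem_insert_of_mem hmv'z'
          · exact mem_insert_of_mem hmv'x'
          · exact mem_insert_self _ _
      · -- the threat u'-x' is still free
        refine ⟨s(u',x'), mem_winSet.mpr ⟨⟨mk_mem_board (Ne.symm hxu'), ?_, ?_⟩, ?_⟩⟩
        · rw [hM7, hMeq']
          simp only [mem_insert, mem_singleton]
          push_neg
          refine ⟨?_, ?_, ?_⟩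
          · intro hh; rw [Sym2.eq_iff] at hh
            rcases hh with ⟨h1, -⟩ | ⟨-, h2⟩
            · exact huv' h1
            · exact hxv' h2
          · intro hh; rw [Sym2.eq_iff] at hh
            rcases hh with ⟨-, h2⟩ | ⟨h1, -⟩
            · exact hxv' h2
            · exact huv' h1
          · intro hh; rw [Sym2.eq_iff] at hh
            rcases hh with ⟨h1, -⟩ | ⟨h1, -⟩
            · exact huv' h1
            · exact huz' h1
        · rw [hB7, mem_union]
          rintro (hcc | hcc)
          · exact hbu' hcc
          · exact hc hcc
        · refine ⟨v', u', x', Ne.symm huv', Ne.symm hxv', Ne.symm hxu', ?_, ?_, ?_⟩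
          · rw [show s(v',u') = s(u',v') from Sym2.eq_swap]
            exact mem_insert_of_mem hmu'v'
          · exact mem_insert_of_mem hmv'x'
          · exact mem_insert_self _ _
    -- step 8: Maker completes a triangle
    refine ⟨8, ?_⟩
    have q8 : P 8 = makerMove (P 7) (mst u0 (P 7)) := playBF_odd _ _ 7 rfl
    have hms7 : mst u0 (P 7) = hW7.choose := by unfold mst; rw [dif_pos hW7]
    obtain ⟨⟨hb8, hm8, hbB8⟩, htri8⟩ := mem_winSet.mp hW7.choose_spec
    have hP8 : P 8 = ⟨insert hW7.choose (P 7).M, (P 7).B⟩ := by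
      rw [q8, hms7]; exact makerMove_eq hb8 hm8 hbB8
    show TriangleWin (P 8).M
    rw [hP8]
    exact htri8
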